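/- Suppose F ⊆ ℍ intersects every wedge in ℍ, where ℍ = { (x,y) ∈ ℝ² : y > 0 } is the open upper half plane. Then there is a unit vector u ∈ 𝕊⁺ = 𝕊 ∩ ℍ such that T_u(F) is dense in ℝ. -/

import Mathlib

open Filter Metric Set

/-- `Tu u : ℝ² → ℝ` is the orthogonal projection parallel to `u`, i.e. the orthogonal projection
(with the orthogonal complement of `u` identified isometrically with `ℝ`) whose fibers are the
lines parallel to `u`: `Tu u x = Tu u y ↔ x - y = t • u` for some `t : ℝ` (when `‖u‖ = 1`). -/
def Tu (u x : EuclideanSpace ℝ (Fin 2)) : ℝ :=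
  x 0 * u 1 - x 1 * u 0

/-- The open upper half plane `ℍ = { (x,y) ∈ ℝ² : y > 0 }`. -/
def upperH : Set (EuclideanSpace ℝ (Fin 2)) := {z | 0 < z 1}

/-- The wedge `C^{u,+}_{s,ε} = { t • v : t > s, ‖v‖ = 1, ‖v - u‖ < ε }` around `u`. -/
def wedgeH (u : EuclideanSpace ℝ (Fin 2)) (s ε : ℝ) : Set (EuclideanSpace ℝ (Fin 2)) :=
  {w | ∃ (t : ℝ) (v : EuclideanSpace ℝ (Fin 2)), s < t ∧ ‖v‖ = 1 ∧ ‖v - u‖ < ε ∧ w = t • v}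

open Real

noncomputable def uvec (θ : ℝ) : EuclideanSpace ℝ (Fin 2) := WithLp.toLp 2 ![Real.cos θ, Real.sin θ]

lemma uvec0 (θ : ℝ) : uvec θ 0 = Real.cos θ := rfl
lemma uvec1 (θ : ℝ) : uvec θ 1 = Real.sin θ := rfl

lemma norm_uvec (θ : ℝ) : ‖uvec θ‖ = 1 := by
  rw [EuclideanSpace.norm_eq]
  simp [Fin.sum_univ_two, uvec0, uvec1, sq_abs, Real.cos_sq_add_sin_sq,
    Real.sin_sq_add_cos_sq]

lemma norm_sub_eq2 (v u : EuclideanSpace ℝ (Fin 2)) :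
    ‖v - u‖ = Real.sqrt ((v 0 - u 0)^2 + (v 1 - u 1)^2) := by
  rw [EuclideanSpace.norm_eq]
  simp [Fin.sum_univ_two, sq_abs]

lemma dense_W (F : Set (EuclideanSpace ℝ (Fin 2)))
    (hint : ∀ (u : EuclideanSpace ℝ (Fin 2)) (s ε : ℝ), ‖u‖ = 1 → 0 < u 1 →
      0 < s → 0 < ε → wedgeH u s ε ⊆ upperH → (F ∩ wedgeH u s ε).Nonempty)
    (q c : ℝ) (hc : 0 < c) :
    Dense ((Set.Icc (0:ℝ) π)ᶜ ∪ {θ : ℝ | ∃ x ∈ F, |Tu (uvec θ) x - q| < c}) := by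
  rw [Metric.dense_iff]
  intro θ0 r hr
  by_cases h1 : θ0 ∈ Ioo (0:ℝ) π
  · -- main case
    obtain ⟨h1a, h1b⟩ := h1
    have hsinθ0 : 0 < Real.sin θ0 := Real.sin_pos_of_pos_of_lt_pi h1a h1b
    obtain ⟨δ, hδ, hδr, hδθ, hδπ⟩ :
        ∃ δ : ℝ, 0 < δ ∧ δ < r ∧ δ < θ0 ∧ δ < π - θ0 := by
      refine ⟨min r (min θ0 (π - θ0)) / 2, ?_, ?_, ?_, ?_⟩
      · have : 0 < min r (min θ0 (π - θ0)) := by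
          simp only [lt_min_iff]; exact ⟨hr, h1a, by linarith⟩
        positivity
      · have := min_le_left r (min θ0 (π - θ0)); linarith
      · have := le_trans (min_le_right r (min θ0 (π - θ0))) (min_le_left θ0 (π - θ0))
        linarith
      · have := le_trans (min_le_right r (min θ0 (π - θ0))) (min_le_right θ0 (π - θ0))
        linarith
    have hδpi : δ < π := by linarith
    have hsinδ : 0 < Real.sin δ := Real.sin_pos_of_pos_of_lt_pi hδ hδpi
    obtain ⟨ε, hε, hεδ, hεθ⟩ :
        ∃ ε : ℝ, 0 < ε ∧ ε ≤ Real.sin δ / 2 ∧ ε ≤ Real.sin θ0 / 2 := by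
      refine ⟨min (Real.sin δ) (Real.sin θ0) / 2, ?_, ?_, ?_⟩
      · have := lt_min hsinδ hsinθ0; positivity
      · have := min_le_left (Real.sin δ) (Real.sin θ0); linarith
      · have := min_le_right (Real.sin δ) (Real.sin θ0); linarith
    obtain ⟨s, hs, hsq⟩ :
        ∃ s : ℝ, 0 < s ∧ |q| + 1 ≤ s * (Real.sin δ / 2) := by
      refine ⟨2 * (|q| + 1) / Real.sin δ, by positivity, ?_⟩
      rw [div_mul_eq_mul_div, mul_comm]
      rw [le_div_iff₀ hsinδ]
      ring_nf
      nlinarith [abs_nonneg q]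
    have hu1 : 0 < uvec θ0 1 := by rw [uvec1]; exact hsinθ0
    -- every point of the wedge has positive second coordinate
    have hwedge : wedgeH (uvec θ0) s ε ⊆ upperH := by
      rintro w ⟨t, v, hts, hv, hvu, rfl⟩
      have hv1 : |v 1 - Real.sin θ0| ≤ ‖v - uvec θ0‖ := by
        rw [norm_sub_eq2, uvec1]
        rw [show |v 1 - Real.sin θ0| = Real.sqrt ((v 1 - Real.sin θ0)^2) by
          rw [Real.sqrt_sq_eq_abs]]
        apply Real.sqrt_le_sqrt
        rw [uvec0]
        nlinarith [sq_nonneg (v 0 - Real.cos θ0)]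
      have hv1pos : 0 < v 1 := by
        have h9 := (abs_lt.mp (lt_of_le_of_lt hv1 hvu)).1
        linarith
      show 0 < (t • v) 1
      have h8 : (t • v) 1 = t * v 1 := rfl
      rw [h8]
      exact mul_pos (lt_trans hs hts) hv1pos
    obtain ⟨x, hxF, t, v, hts, hv, hvu, hx⟩ :=
      hint (uvec θ0) s ε (norm_uvec θ0) hu1 hs hε hwedge
    have ht : 0 < t := lt_trans hs hts
    have hab : (v 0 - Real.cos θ0)^2 + (v 1 - Real.sin θ0)^2 < ε^2 := by
      have h2 : ‖v - uvec θ0‖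
          = Real.sqrt ((v 0 - Real.cos θ0)^2 + (v 1 - Real.sin θ0)^2) := by
        rw [norm_sub_eq2, uvec0, uvec1]
      rw [h2] at hvu
      exact (Real.sqrt_lt' hε).mp hvu
    have herr : ∀ θ : ℝ,
        |(v 0 - Real.cos θ0) * Real.sin θ - (v 1 - Real.sin θ0) * Real.cos θ| < ε := by
      intro θ
      have key : ((v 0 - Real.cos θ0) * Real.sin θ - (v 1 - Real.sin θ0) * Real.cos θ)^2
          < ε^2 := by
        nlinarith [sq_nonneg ((v 0 - Real.cos θ0) * Real.cos θ
          + (v 1 - Real.sin θ0) * Real.sin θ), Real.sin_sq_add_cos_sq θ]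
      rw [← Real.sqrt_sq_eq_abs]
      exact (Real.sqrt_lt' hε).mpr key
    have hfc : Continuous (fun θ : ℝ => v 0 * Real.sin θ - v 1 * Real.cos θ) := by
      fun_prop
    have hfeq : ∀ θ : ℝ, v 0 * Real.sin θ - v 1 * Real.cos θ
        = Real.sin (θ - θ0)
          + ((v 0 - Real.cos θ0) * Real.sin θ - (v 1 - Real.sin θ0) * Real.cos θ) := by
      intro θ
      rw [Real.sin_sub]
      ring
    have hqt : |q / t| < Real.sin δ / 2 := by
      rw [abs_div, abs_of_pos ht, div_lt_iff₀ ht]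
      nlinarith [hsq, hts, hsinδ]
    have h6 := abs_lt.mp hqt
    have hfa : v 0 * Real.sin (θ0 - δ) - v 1 * Real.cos (θ0 - δ) ≤ q / t := by
      have h2 := hfeq (θ0 - δ)
      have h3 : Real.sin (θ0 - δ - θ0) = -Real.sin δ := by
        rw [show θ0 - δ - θ0 = -δ by ring, Real.sin_neg]
      have h5 := (abs_lt.mp (herr (θ0 - δ))).2
      rw [h2, h3]
      linarith
    have hfb : q / t ≤ v 0 * Real.sin (θ0 + δ) - v 1 * Real.cos (θ0 + δ) := by
      have h2 := hfeq (θ0 + δ)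
      have h3 : Real.sin (θ0 + δ - θ0) = Real.sin δ := by
        rw [show θ0 + δ - θ0 = δ by ring]
      have h5 := (abs_lt.mp (herr (θ0 + δ))).1
      rw [h2, h3]
      linarith
    have hivt := intermediate_value_Icc (by linarith : θ0 - δ ≤ θ0 + δ) hfc.continuousOn
    obtain ⟨θ, hθIcc, hθf⟩ := hivt ⟨hfa, hfb⟩
    refine ⟨θ, ?_, ?_⟩
    · rw [mem_ball, Real.dist_eq, abs_lt]
      obtain ⟨hl, hh⟩ := hθIcc
      constructor <;> linarith
    · right
      refine ⟨x, hxF, ?_⟩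
      have hTu : Tu (uvec θ) x = t * (v 0 * Real.sin θ - v 1 * Real.cos θ) := by
        simp only [Tu, uvec0, uvec1, hx]
        have h0 : (t • v) 0 = t * v 0 := rfl
        have h1 : (t • v) 1 = t * v 1 := rfl
        rw [h0, h1]; ring
      have hθf' : v 0 * Real.sin θ - v 1 * Real.cos θ = q / t := hθf
      rw [hTu, hθf', mul_div_cancel₀ q (ne_of_gt ht)]
      simpa using hc
  · -- boundary case
    rw [mem_Ioo, not_and_or] at h1
    push_neg at h1
    rcases h1 with h | h
    · refine ⟨θ0 - r/2, ?_, Or.inl ?_⟩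
      · rw [mem_ball, Real.dist_eq]; rw [abs_lt]; constructor <;> linarith
      · simp only [mem_compl_iff, mem_Icc, not_and_or, not_le]
        left; linarith
    · refine ⟨θ0 + r/2, ?_, Or.inl ?_⟩
      · rw [mem_ball, Real.dist_eq]; rw [abs_lt]; constructor <;> linarith
      · simp only [mem_compl_iff, mem_Icc, not_and_or, not_le]
        right; linarith

lemma open_W (F : Set (EuclideanSpace ℝ (Fin 2))) (q c : ℝ) :
    IsOpen ((Set.Icc (0:ℝ) π)ᶜ ∪ {θ : ℝ | ∃ x ∈ F, |Tu (uvec θ) x - q| < c}) := by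
  apply IsOpen.union
  · exact isOpen_compl_iff.mpr isClosed_Icc
  · have : {θ : ℝ | ∃ x ∈ F, |Tu (uvec θ) x - q| < c}
        = ⋃ x ∈ F, {θ : ℝ | |Tu (uvec θ) x - q| < c} := by
      ext θ; simp
    rw [this]
    apply isOpen_biUnion
    intro x _
    have hcont : Continuous (fun θ : ℝ => |Tu (uvec θ) x - q|) := by
      have : (fun θ : ℝ => |Tu (uvec θ) x - q|)
          = fun θ : ℝ => |x 0 * Real.sin θ - x 1 * Real.cos θ - q| := by
        funext θ; rw [Tu, uvec0, uvec1]
      rw [this]; fun_prop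
    exact isOpen_lt hcont continuous_const


theorem stmt10 (F : Set (EuclideanSpace ℝ (Fin 2))) (hF : F ⊆ upperH)
    (hint : ∀ (u : EuclideanSpace ℝ (Fin 2)) (s ε : ℝ), ‖u‖ = 1 → 0 < u 1 →
      0 < s → 0 < ε → wedgeH u s ε ⊆ upperH → (F ∩ wedgeH u s ε).Nonempty) :
    ∃ u : EuclideanSpace ℝ (Fin 2), ‖u‖ = 1 ∧ 0 < u 1 ∧ Dense (Tu u '' F) := by
  set W : ℚ × ℕ → Set ℝ := fun p =>
    (Set.Icc (0:ℝ) π)ᶜ ∪ {θ : ℝ | ∃ x ∈ F, |Tu (uvec θ) x - (p.1 : ℝ)| < 1 / (p.2 + 1)}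
    with hW
  have hDenseInter : Dense (⋂ p, W p) :=
    dense_iInter_of_isOpen (fun p => open_W F _ _)
      (fun p => dense_W F hint (p.1 : ℝ) (1 / (p.2 + 1)) (by positivity))
  have hIoo : (Ioo (0:ℝ) π).Nonempty := ⟨π/2, by positivity, by linarith [Real.pi_pos]⟩
  obtain ⟨θ, hθD, hθI⟩ := hDenseInter.exists_mem_open isOpen_Ioo hIoo
  refine ⟨uvec θ, norm_uvec θ, ?_, ?_⟩
  · rw [uvec1]; exact Real.sin_pos_of_pos_of_lt_pi hθI.1 hθI.2
  · rw [Metric.dense_iff]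
    intro y r hr
    obtain ⟨q, hq1, hq2⟩ := exists_rat_btwn (show y - r/2 < y by linarith)
    obtain ⟨n, hn⟩ := exists_nat_one_div_lt (show (0:ℝ) < r/2 by linarith)
    have hθW : θ ∈ W (q, n) := mem_iInter.mp hθD (q, n)
    rcases hθW with h | ⟨x, hxF, hx⟩
    · exact absurd ⟨le_of_lt hθI.1, le_of_lt hθI.2⟩ h
    · refine ⟨Tu (uvec θ) x, ?_, mem_image_of_mem _ hxF⟩
      rw [mem_ball, Real.dist_eq, abs_lt]
      have hx' := abs_lt.mp hx
      simp only at hx'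
      constructor <;> [nlinarith [hx'.1, hn]; nlinarith [hx'.2, hn]]
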